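/- Let f, g : Z_p → Q_p be continuously differentiable functions and n ∈ Z with Δ(f − g) > n. Then the Volkenborn integrals satisfy ∫_{Z_p} f(t) dt ≡ ∫_{Z_p} g(t) dt mod p^n·Z_p. -/

import Mathlib

open scoped Classical
open Filter

/-- `l(k)`: `l(0) = 0` and `l(k) = ⌊log_p k⌋ + 1` for `k > 0`. -/
def waveletLevel (p k : ℕ) : ℕ := if k = 0 then 0 else Nat.log p k + 1

/-- `k₋`: `k` with the top digit of its `p`-adic expansion deleted. -/
def waveletPred (p k : ℕ) : ℕ := k % p ^ (waveletLevel p k - 1)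

/-- Wavelet coefficients of `f` (as a function on `ℤ_p`, here realized on the closed
unit ball of `ℚ_p`): `a_0 = f(0)`, `a_k = f(k) - f(k₋)`. -/
noncomputable def waveletCoeff (p : ℕ) [Fact p.Prime] (f : ℚ_[p] → ℚ_[p]) (k : ℕ) : ℚ_[p] :=
  if k = 0 then f 0 else f (k : ℚ_[p]) - f ((waveletPred p k : ℕ) : ℚ_[p])

/-- The extended `p`-adic valuation, with `v_p(0) = ⊤`. -/
noncomputable def valE (p : ℕ) [Fact p.Prime] (x : ℚ_[p]) : EReal :=
  if x = 0 then ⊤ else ((x.valuation : ℝ) : EReal)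

/-- `Δ(f) = inf_k (v_p(a_k) - l(k))` for the wavelet expansion `f = ∑ a_k χ_k`. -/
noncomputable def waveletDelta (p : ℕ) [Fact p.Prime] (f : ℚ_[p] → ℚ_[p]) : EReal :=
  ⨅ k : ℕ, (valE p (waveletCoeff p f k) - ((waveletLevel p k : ℝ) : EReal))

/-- The `n`-th Riemann sum defining the Volkenborn integral. -/
noncomputable def volkenbornSum (p : ℕ) [Fact p.Prime] (f : ℚ_[p] → ℚ_[p]) (n : ℕ) : ℚ_[p] :=
  ((p : ℚ_[p]) ^ n)⁻¹ * ∑ k ∈ Finset.range (p ^ n), f (k : ℚ_[p])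

lemma level_le {p : ℕ} {k m : ℕ} (hk : k < p ^ m) : waveletLevel p k ≤ m := by
  unfold waveletLevel
  split
  · exact Nat.zero_le _
  · next hk0 => exact Nat.succ_le_of_lt (Nat.log_lt_of_lt_pow hk0 hk)

lemma level_eq {p : ℕ} (hp : 1 < p) {k m : ℕ} (h1 : p ^ m ≤ k) (h2 : k < p ^ (m + 1)) :
    waveletLevel p k = m + 1 := by
  have hk0 : k ≠ 0 := by have := Nat.one_le_pow m p (by omega); omega
  rw [waveletLevel, if_neg hk0, Nat.log_eq_of_pow_le_of_lt_pow h1 h2]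

lemma mod_sum {p : ℕ} [Fact p.Prime] (h : ℚ_[p] → ℚ_[p]) (m : ℕ) (d : ℕ) :
    ∑ j ∈ Finset.range (d * p ^ m), h ((j % p ^ m : ℕ) : ℚ_[p]) =
      (d : ℚ_[p]) * ∑ j ∈ Finset.range (p ^ m), h (j : ℚ_[p]) := by
  induction d with
  | zero => simp
  | succ d ih =>
    have hle : d * p ^ m ≤ (d + 1) * p ^ m := by nlinarith [Nat.one_le_pow m p (Fact.out : p.Prime).pos]
    rw [Finset.range_eq_Ico, ← Finset.sum_Ico_consecutive _ (Nat.zero_le _) hle,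
      ← Finset.range_eq_Ico, ih, Finset.sum_Ico_eq_sum_range]
    have heq : ∀ k ∈ Finset.range ((d + 1) * p ^ m - d * p ^ m),
        h (((d * p ^ m + k) % p ^ m : ℕ) : ℚ_[p]) = h ((k % p ^ m : ℕ) : ℚ_[p]) := by
      intro k _
      have : (d * p ^ m + k) % p ^ m = k % p ^ m := by
        simp [Nat.add_mod, Nat.mul_mod_left]
      rw [this]
    rw [Finset.sum_congr rfl heq]
    have hcard : (d + 1) * p ^ m - d * p ^ m = p ^ m := by ring_nf; omega
    rw [hcard]
    have : ∀ k ∈ Finset.range (p ^ m), h ((k % p ^ m : ℕ) : ℚ_[p]) = h ((k : ℕ) : ℚ_[p]) := by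
      intro k hk
      rw [Nat.mod_eq_of_lt (Finset.mem_range.mp hk)]
    rw [Finset.sum_congr rfl this]
    push_cast
    ring

lemma key_sum (p : ℕ) [Fact p.Prime] (h : ℚ_[p] → ℚ_[p]) (m : ℕ) :
    ∑ j ∈ Finset.range (p ^ m), h (j : ℚ_[p]) =
      ∑ k ∈ Finset.range (p ^ m),
        waveletCoeff p h k * (p : ℚ_[p]) ^ (m - waveletLevel p k) := by
  have hp : 1 < p := (Fact.out : p.Prime).one_lt
  induction m with
  | zero => simp [waveletCoeff, waveletLevel]
  | succ m ih =>
    have hpm : p ^ m ≤ p ^ (m + 1) := Nat.pow_le_pow_right (by omega) (by omega)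
    have hsplit : ∀ F : ℕ → ℚ_[p],
        ∑ j ∈ Finset.range (p ^ (m+1)), F j =
        (∑ j ∈ Finset.range (p ^ m), F j) + ∑ j ∈ Finset.Ico (p ^ m) (p ^ (m+1)), F j := by
      intro F
      rw [Finset.range_eq_Ico, Finset.range_eq_Ico]
      exact (Finset.sum_Ico_consecutive F (Nat.zero_le _) hpm).symm
    have hblock : ∀ j ∈ Finset.Ico (p ^ m) (p ^ (m+1)),
        h (j : ℚ_[p]) = waveletCoeff p h j + h ((j % p ^ m : ℕ) : ℚ_[p]) := by
      intro j hj
      rw [Finset.mem_Ico] at hj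
      have hj0 : j ≠ 0 := by have := Nat.one_le_pow m p (by omega); omega
      have hl : waveletLevel p j = m + 1 := level_eq hp hj.1 hj.2
      rw [waveletCoeff, if_neg hj0, waveletPred, hl]
      simp only [Nat.add_sub_cancel]
      ring
    -- sum of h (j % p^m) over the upper block:
    have hmod : ∑ j ∈ Finset.Ico (p ^ m) (p ^ (m+1)), h ((j % p ^ m : ℕ) : ℚ_[p]) =
        ((p : ℚ_[p]) - 1) * ∑ j ∈ Finset.range (p ^ m), h (j : ℚ_[p]) := by
      have h1 : ∑ j ∈ Finset.range (p ^ (m+1)), h ((j % p ^ m : ℕ) : ℚ_[p]) =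
          (p : ℚ_[p]) * ∑ j ∈ Finset.range (p ^ m), h (j : ℚ_[p]) := by
        have : p ^ (m+1) = p * p ^ m := by ring
        rw [this]; exact mod_sum h m p
      have h2 : ∑ j ∈ Finset.range (p ^ m), h ((j % p ^ m : ℕ) : ℚ_[p]) =
          ∑ j ∈ Finset.range (p ^ m), h (j : ℚ_[p]) :=
        Finset.sum_congr rfl fun k hk => by rw [Nat.mod_eq_of_lt (Finset.mem_range.mp hk)]
      have := hsplit (fun j => h ((j % p ^ m : ℕ) : ℚ_[p]))
      rw [h1, h2] at this
      linear_combination -this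
    rw [hsplit (fun j => h ((j:ℕ) : ℚ_[p])), Finset.sum_congr rfl hblock, Finset.sum_add_distrib,
      hmod, ih, hsplit (fun k => waveletCoeff p h k * (p : ℚ_[p]) ^ (m + 1 - waveletLevel p k))]
    have hlow : ∑ k ∈ Finset.range (p ^ m),
        waveletCoeff p h k * (p : ℚ_[p]) ^ (m + 1 - waveletLevel p k) =
        (p : ℚ_[p]) * ∑ k ∈ Finset.range (p ^ m),
          waveletCoeff p h k * (p : ℚ_[p]) ^ (m - waveletLevel p k) := by
      rw [Finset.mul_sum]
      refine Finset.sum_congr rfl fun k hk => ?_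
      have hl : waveletLevel p k ≤ m := level_le (Finset.mem_range.mp hk)
      have : m + 1 - waveletLevel p k = (m - waveletLevel p k) + 1 := by omega
      rw [this, pow_succ]
      ring
    have hhigh : ∑ k ∈ Finset.Ico (p ^ m) (p ^ (m+1)),
        waveletCoeff p h k * (p : ℚ_[p]) ^ (m + 1 - waveletLevel p k) =
        ∑ k ∈ Finset.Ico (p ^ m) (p ^ (m+1)), waveletCoeff p h k := by
      refine Finset.sum_congr rfl fun k hk => ?_
      rw [Finset.mem_Ico] at hk
      rw [level_eq hp hk.1 hk.2]
      simp
    rw [hlow, hhigh]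
    ring

/-- If `f, g` are continuously differentiable on `ℤ_p` (hence Volkenborn integrable,
with integrals `I` and `J`) and `Δ(f - g) > n`, then
`∫ f ≡ ∫ g mod p^n ℤ_p`, i.e. `‖I - J‖ ≤ p^{-n}`. -/
theorem volkenborn_congruent (p : ℕ) [Fact p.Prime] (f g f' g' : ℚ_[p] → ℚ_[p])
    (hfd : ∀ x : ℚ_[p], ‖x‖ ≤ 1 → HasDerivWithinAt f (f' x) {y : ℚ_[p] | ‖y‖ ≤ 1} x)
    (hfc : ContinuousOn f' {y : ℚ_[p] | ‖y‖ ≤ 1})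
    (hgd : ∀ x : ℚ_[p], ‖x‖ ≤ 1 → HasDerivWithinAt g (g' x) {y : ℚ_[p] | ‖y‖ ≤ 1} x)
    (hgc : ContinuousOn g' {y : ℚ_[p] | ‖y‖ ≤ 1})
    (n : ℤ) (hΔ : ((n : ℝ) : EReal) < waveletDelta p (fun x => f x - g x))
    (I J : ℚ_[p])
    (hI : Tendsto (volkenbornSum p f) atTop (nhds I))
    (hJ : Tendsto (volkenbornSum p g) atTop (nhds J)) :
    ‖I - J‖ ≤ (p : ℝ) ^ (-n) := by
  set h : ℚ_[p] → ℚ_[p] := fun x => f x - g x with hh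
  have hp1 : (1 : ℝ) ≤ (p : ℝ) := by
    exact_mod_cast Nat.one_le_iff_ne_zero.mpr (Fact.out : p.Prime).pos.ne'
  have hp0 : (p : ℝ) ≠ 0 := by positivity
  -- per-coefficient bound from hΔ
  have hcoeff : ∀ k : ℕ, waveletCoeff p h k ≠ 0 →
      (n : ℤ) + (waveletLevel p k : ℤ) < (waveletCoeff p h k).valuation := by
    intro k hk
    have h1 : ((n : ℝ) : EReal) <
        valE p (waveletCoeff p h k) - ((waveletLevel p k : ℝ) : EReal) := by
      have h2 : waveletDelta p h ≤
          valE p (waveletCoeff p h k) - ((waveletLevel p k : ℝ) : EReal) := by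
        rw [waveletDelta]
        exact iInf_le _ k
      exact hΔ.trans_le h2
    rw [valE, if_neg hk, ← EReal.coe_sub, EReal.coe_lt_coe_iff] at h1
    have h3 : (n : ℝ) + (waveletLevel p k : ℝ) < ((waveletCoeff p h k).valuation : ℝ) := by
      linarith
    exact_mod_cast h3
  -- bound on each Riemann sum of h
  have hbound : ∀ m : ℕ, ‖volkenbornSum p h m‖ ≤ (p : ℝ) ^ (-n) := by
    intro m
    rw [volkenbornSum, key_sum p h m, Finset.mul_sum]
    apply IsUltrametricDist.norm_sum_le_of_forall_le_of_nonneg (by positivity)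
    intro k hk
    rcases eq_or_ne (waveletCoeff p h k) 0 with h0 | h0
    · simp [h0]; positivity
    have hlk : waveletLevel p k ≤ m := level_le (Finset.mem_range.mp hk)
    have hv := hcoeff k h0
    rw [norm_mul, norm_mul, norm_inv, Padic.norm_p_pow, Padic.norm_eq_zpow_neg_valuation h0,
      Padic.norm_p_pow, ← zpow_neg, neg_neg, ← zpow_add₀ hp0, ← zpow_add₀ hp0]
    apply zpow_le_zpow_right₀ (by linarith : (1:ℝ) ≤ (p:ℝ))
    have : ((m - waveletLevel p k : ℕ) : ℤ) = (m : ℤ) - (waveletLevel p k : ℤ) := by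
      omega
    omega
  -- pass to the limit
  have hdiff : ∀ m : ℕ, volkenbornSum p f m - volkenbornSum p g m = volkenbornSum p h m := by
    intro m
    rw [volkenbornSum, volkenbornSum, volkenbornSum, ← mul_sub, ← Finset.sum_sub_distrib]
  have hT : Tendsto (fun m => ‖volkenbornSum p f m - volkenbornSum p g m‖) atTop
      (nhds ‖I - J‖) := (hI.sub hJ).norm
  refine le_of_tendsto hT (Filter.Eventually.of_forall fun m => ?_)
  rw [hdiff m]
  exact hbound m
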